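/- Let p_{1,1},…,p_{1,k_1},…,p_{q,1},…,p_{q,k_q} be K = k_1+⋯+k_q pairwise distinct prime numbers and let Q(x_1,…,x_q) be a polynomial with integer coefficients. For each assignment b of bits b_{i,j} ∈ {0,1} (1 ≤ i ≤ q, 1 ≤ j ≤ k_i), set π_i(b) = Σ_{j=1}^{k_i} (−1)^{b_{i,j}} √p_{i,j}. Then the product, over all 2^K bit assignments b, of the real numbers Q(π_1(b),…,π_q(b)) is an integer. -/

import Mathlib

open MvPolynomial

noncomputable def sgn {ι : Type*} [DecidableEq ι] (x : ι) :
    MvPolynomial ι ℤ →ₐ[ℤ] MvPolynomial ι ℤ :=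
  aeval (fun y => if y = x then -X y else X y)

lemma sgn_monomial {ι : Type*} [DecidableEq ι] (x : ι) (m : ι →₀ ℕ) (c : ℤ) :
    sgn x (monomial m c) = (-1 : ℤ)^(m x) • monomial m c := by
  rw [sgn, aeval_monomial, monomial_eq]
  have h1 : ∀ y : ι, (if y = x then -X y else X y : MvPolynomial ι ℤ)
      = (if y = x then -1 else 1) * X y := by
    intro y; split_ifs <;> ring
  simp only [h1]
  rw [Finsupp.prod, Finsupp.prod]
  rw [Finset.prod_congr rfl (fun y _ => mul_pow _ _ _), Finset.prod_mul_distrib]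
  have h2 : (∏ y ∈ m.support, (if y = x then (-1 : MvPolynomial ι ℤ) else 1) ^ m y)
      = (-1)^(m x) := by
    rw [Finset.prod_congr rfl (fun y _ => by rw [apply_ite (· ^ m y), one_pow])]
    rw [Finset.prod_ite_eq' m.support x (fun y => (-1 : MvPolynomial ι ℤ) ^ m y)]
    split_ifs with h
    · rfl
    · rw [Finsupp.notMem_support_iff.mp h, pow_zero]
  rw [h2]
  simp [algebraMap_eq, zsmul_eq_mul]
  ring

lemma coeff_sgn {ι : Type*} [DecidableEq ι] (x : ι) (P : MvPolynomial ι ℤ) (m : ι →₀ ℕ) :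
    coeff m (sgn x P) = (-1)^(m x) * coeff m P := by
  induction P using MvPolynomial.induction_on' with
  | monomial m' c =>
    rw [sgn_monomial, coeff_smul, smul_eq_mul, coeff_monomial]
    split_ifs with h
    · subst h; rfl
    · simp
  | add p q hp hq =>
    rw [map_add, coeff_add, coeff_add, hp, hq]; ring

lemma even_value {ι : Type*} [Fintype ι] [DecidableEq ι] (P : MvPolynomial ι ℤ)
    (hP : ∀ x, sgn x P = P) (c : ι → ℕ) (s : ι → ℝ) (hs : ∀ x, s x ^ 2 = c x) :
    ∃ z : ℤ, aeval s P = z := by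
  have heven : ∀ m ∈ P.support, ∀ x, Even (m x) := by
    intro m hm x
    by_contra hodd
    have h := coeff_sgn x P m
    rw [hP x, (Nat.not_even_iff_odd.mp hodd).neg_one_pow] at h
    have : coeff m P = 0 := by linarith
    exact (mem_support_iff.mp hm) this
  refine ⟨∑ m ∈ P.support, coeff m P * ∏ x, (c x : ℤ)^(m x / 2), ?_⟩
  rw [aeval_def, eval₂_eq']
  push_cast
  refine Finset.sum_congr rfl fun m hm => ?_
  congr 1
  refine Finset.prod_congr rfl fun x _ => ?_
  obtain ⟨t, ht⟩ := heven m hm x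
  rw [ht, show t + t = 2 * t by ring, pow_mul, hs, show (2 * t) / 2 = t by omega]

/-- For pairwise distinct primes `p i j` and an integer polynomial
`Q`, the product over all `2^K` bit assignments `b` of `Q(π_1(b), …, π_q(b))`, where
`π i (b) = ∑ j, (-1)^(b i j) * √(p i j)`, is an integer. -/
theorem stmt_4 (q : ℕ) (k : Fin q → ℕ)
    (p : (i : Fin q) → Fin (k i) → ℕ) (hp : ∀ i j, (p i j).Prime)
    (hinj : Function.Injective fun x : Σ i : Fin q, Fin (k i) => p x.1 x.2)
    (Q : MvPolynomial (Fin q) ℤ) :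
    ∃ z : ℤ,
      ∏ b : (i : Fin q) → Fin (k i) → Bool,
        MvPolynomial.aeval
          (fun i => ∑ j, (if b i j then (-1 : ℝ) else 1) * Real.sqrt (p i j)) Q
        = (z : ℝ) := by
  set ι := Σ i : Fin q, Fin (k i)
  set f : ((i : Fin q) → Fin (k i) → Bool) → Fin q → MvPolynomial ι ℤ :=
    fun b i => ∑ j, (if b i j then -X (⟨i, j⟩ : ι) else X ⟨i, j⟩) with hf
  set P : MvPolynomial ι ℤ := ∏ b, aeval (f b) Q with hPdef
  set s : ι → ℝ := fun x => Real.sqrt (p x.1 x.2) with hsdef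
  have key : ∃ z : ℤ, aeval s P = z := by
    apply even_value P _ (fun x => p x.1 x.2) s
    · intro x
      exact Real.sq_sqrt (by positivity)
    · intro x
      rw [hPdef, map_prod]
      have hfac : ∀ b, sgn x (aeval (f b) Q)
          = aeval (f (fun i j => if (⟨i, j⟩ : ι) = x then !b i j else b i j)) Q := by
        intro b
        rw [show sgn x (aeval (f b) Q) = ((sgn x).comp (aeval (f b))) Q from rfl,
          comp_aeval]
        have hg : (fun i => sgn x (f b i))
            = f (fun i j => if (⟨i, j⟩ : ι) = x then !b i j else b i j) := by
          funext i
          simp only [hf, map_sum]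
          refine Finset.sum_congr rfl fun j _ => ?_
          by_cases hb : b i j <;> by_cases hx : (⟨i, j⟩ : ι) = x <;>
            simp [sgn, hb, hx]
        rw [hg]
      rw [Finset.prod_congr rfl (fun b _ => hfac b)]
      set e : ((i : Fin q) → Fin (k i) → Bool) ≃ ((i : Fin q) → Fin (k i) → Bool) :=
        Function.Involutive.toPerm
          (fun b i j => if (⟨i, j⟩ : ι) = x then !b i j else b i j)
          (by intro b; funext i j; by_cases hx : (⟨i, j⟩ : ι) = x <;> simp [hx])
      exact e.prod_comp (fun b => aeval (f b) Q)
  obtain ⟨z, hz⟩ := key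
  refine ⟨z, ?_⟩
  rw [hPdef, map_prod] at hz
  rw [← hz]
  refine Finset.prod_congr rfl fun b _ => ?_
  rw [show (aeval s) ((aeval (f b)) Q) = ((aeval s).comp (aeval (f b))) Q from rfl,
    comp_aeval]
  have hg : (fun i => aeval s (f b i))
      = fun i => ∑ j, (if b i j then (-1 : ℝ) else 1) * Real.sqrt (p i j) := by
    funext i
    simp only [hf, map_sum]
    refine Finset.sum_congr rfl fun j _ => ?_
    by_cases hb : b i j <;> simp [hb, hsdef]
  rw [hg]
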